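/- Consider the sequential assignment problem with random horizon (Problem (AP2)): the optimal expected total reward sup_{π ∈ Π(𝒴̄)} E[∑_{t=1}^{N} p_{π_t} Y_t] equals the optimal expected total reward of the standard sequential assignment problem (Problem (AP1)) with fixed horizon N_max and independent job sizes Y_t · ∑_{k=t}^{N_max} γ_k, i.e. sup_{π ∈ Π(𝒴̄)} E[∑_{t=1}^{N} p_{π_t} Y_t] = sup_{π ∈ Π(𝒴)} E[∑_{t=1}^{N_max} p_{π_t} Y_t ∑_{k=t}^{N_max} γ_k], where Π(𝒴) is the set of policies adapted to the filtration 𝒴_t = σ(Y_1,…,Y_t). -/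

import Mathlib

open MeasureTheory ProbabilityTheory Finset
open scoped ENNReal Classical

noncomputable section

/-- The σ-algebra on `Ω` generated by the functions `f 1, …, f t`. -/
def genFilt {Ω β : Type*} [MeasurableSpace β] (f : ℕ → Ω → β) (t : ℕ) :
    MeasurableSpace Ω :=
  ⨆ i ∈ Set.Icc 1 t, MeasurableSpace.comap (f i) inferInstance

/-- `τ` is a stopping time with values in `{1,…,n}` of the filtration generated by `f`. -/
def IsStopTime {Ω β : Type*} [MeasurableSpace β] (f : ℕ → Ω → β) (n : ℕ) (τ : Ω → ℕ) : Prop :=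
  (∀ ω, τ ω ∈ Set.Icc 1 n) ∧ ∀ t, MeasurableSet[genFilt f t] {ω | τ ω = t}

/-- The family `(f i)_{i ∈ s}` is independent under `μ`. -/
def IndepSeq {Ω β : Type*} [MeasurableSpace Ω] [MeasurableSpace β]
    (f : ℕ → Ω → β) (s : Set ℕ) (μ : Measure Ω) : Prop :=
  iIndepFun (m := fun _ : s => (inferInstance : MeasurableSpace β)) (fun i : s => f i.1) μ

/-- `N` is independent of the family `(f i)_{i ∈ s}`. -/
def IndepOfSeq {Ω β : Type*} [MeasurableSpace Ω] [MeasurableSpace β]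
    (N : Ω → ℕ) (f : ℕ → Ω → β) (s : Set ℕ) (μ : Measure Ω) : Prop :=
  IndepFun N (fun ω (i : s) => f i.1 ω) μ

/-- The absolute rank `A_{t,k}` of `X t` among `X 1, …, X k`
(the largest observation has rank 1). -/
def absRank {Ω : Type*} (X : ℕ → Ω → ℝ) (t k : ℕ) (ω : Ω) : ℕ :=
  ((Finset.Icc 1 k).filter fun j => X t ω ≤ X j ω).card

/-- The relative rank `R_t = A_{t,t}`. -/
def relRank {Ω : Type*} (X : ℕ → Ω → ℝ) (t : ℕ) (ω : Ω) : ℕ := absRank X t t ω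

/-- `(X i)_{i ∈ s}` are i.i.d. with an atomless (continuous) common distribution. -/
def IIDContinuousOn {Ω : Type*} [MeasurableSpace Ω] (X : ℕ → Ω → ℝ) (s : Set ℕ)
    (μ : Measure Ω) : Prop :=
  (∀ i ∈ s, Measurable (X i)) ∧ IndepSeq X s μ ∧
  (∀ i ∈ s, ∀ j ∈ s, IdentDistrib (X i) (X j) μ μ) ∧
  (∀ i ∈ s, ∀ x : ℝ, μ {ω | X i ω = x} = 0)

namespace Stmt0Aux

/-- Greedy repair of a candidate assignment into a permutation of `{1,…,Nmax}`. -/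
def rep (Nmax : ℕ) (d : ℕ → ℕ) : ℕ → ℕ
  | t =>
    let used : Finset ℕ := (Finset.Icc 1 (t - 1)).attach.image fun s => rep Nmax d s.1
    let avail : Finset ℕ := Finset.Icc 1 Nmax \ used
    if 1 ≤ t ∧ d t ∈ avail then d t
    else if h : avail.Nonempty then avail.min' h else 0
termination_by t => t
decreasing_by
  have := s.2; simp only [Finset.mem_Icc] at this; omega

/-- The set of still-available labels at time `t`. -/
def availS (Nmax : ℕ) (d : ℕ → ℕ) (t : ℕ) : Finset ℕ :=
  Finset.Icc 1 Nmax \ (Finset.Icc 1 (t - 1)).image (rep Nmax d)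

lemma attach_image_eq {α β : Type*} [DecidableEq β] (s : Finset α) (f : α → β) :
    s.attach.image (fun x => f x.1) = s.image f := by
  conv_rhs => rw [← Finset.attach_image_val (s := s)]
  rw [Finset.image_image]
  rfl

lemma rep_eq (Nmax : ℕ) (d : ℕ → ℕ) (t : ℕ) :
    rep Nmax d t = if 1 ≤ t ∧ d t ∈ availS Nmax d t then d t
      else if h : (availS Nmax d t).Nonempty then (availS Nmax d t).min' h else 0 := by
  rw [rep]
  simp only [availS, attach_image_eq]
  rfl

lemma avail_nonempty (Nmax : ℕ) (d : ℕ → ℕ) (t : ℕ) (h1 : 1 ≤ t) (h2 : t ≤ Nmax) :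
    (availS Nmax d t).Nonempty := by
  rw [← Finset.card_pos]
  have hc : ((Finset.Icc 1 (t - 1)).image (rep Nmax d)).card ≤ t - 1 := by
    refine le_trans (Finset.card_image_le) ?_
    simp [Nat.card_Icc]
  have := Finset.le_card_sdiff ((Finset.Icc 1 (t - 1)).image (rep Nmax d)) (Finset.Icc 1 Nmax)
  have hN : (Finset.Icc 1 Nmax).card = Nmax := by simp [Nat.card_Icc]
  rw [availS]
  omega

lemma rep_mem_avail (Nmax : ℕ) (d : ℕ → ℕ) (t : ℕ) (h1 : 1 ≤ t) (h2 : t ≤ Nmax) :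
    rep Nmax d t ∈ availS Nmax d t := by
  rw [rep_eq]
  split
  · next h => exact h.2
  · rw [dif_pos (avail_nonempty Nmax d t h1 h2)]
    exact Finset.min'_mem _ _

lemma rep_mem_Icc (Nmax : ℕ) (d : ℕ → ℕ) (t : ℕ) (h1 : 1 ≤ t) (h2 : t ≤ Nmax) :
    rep Nmax d t ∈ Finset.Icc 1 Nmax :=
  (Finset.mem_sdiff.mp (rep_mem_avail Nmax d t h1 h2)).1

lemma rep_le (Nmax : ℕ) (d : ℕ → ℕ) (t : ℕ) : rep Nmax d t ≤ Nmax := by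
  rw [rep_eq]
  split
  · next h => exact (Finset.mem_Icc.mp (Finset.mem_sdiff.mp h.2).1).2
  · split
    · next h =>
      have := Finset.min'_mem _ h
      exact (Finset.mem_Icc.mp (Finset.mem_sdiff.mp this).1).2
    · exact Nat.zero_le _

lemma rep_ne (Nmax : ℕ) (d : ℕ → ℕ) {s t : ℕ} (hs : 1 ≤ s) (hst : s < t) (ht : t ≤ Nmax) :
    rep Nmax d t ≠ rep Nmax d s := by
  have hmem := rep_mem_avail Nmax d t (by omega) ht
  have := (Finset.mem_sdiff.mp hmem).2
  intro hEq
  exact this (Finset.mem_image.mpr ⟨s, Finset.mem_Icc.mpr ⟨hs, by omega⟩, hEq.symm⟩)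

lemma rep_bijOn (Nmax : ℕ) (d : ℕ → ℕ) :
    Set.BijOn (rep Nmax d) (Set.Icc 1 Nmax) (Set.Icc 1 Nmax) := by
  have hmaps : Set.MapsTo (rep Nmax d) (Set.Icc 1 Nmax) (Set.Icc 1 Nmax) := by
    intro t ht
    have := rep_mem_Icc Nmax d t ht.1 ht.2
    simpa [Finset.mem_Icc, Set.mem_Icc] using this
  have hinj : Set.InjOn (rep Nmax d) (Set.Icc 1 Nmax) := by
    intro s hs t ht hEq
    by_contra hne
    rcases Nat.lt_or_ge s t with h | h
    · exact rep_ne Nmax d hs.1 h ht.2 hEq.symm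
    · exact rep_ne Nmax d ht.1 (by omega) hs.2 hEq
  refine ⟨hmaps, hinj, ?_⟩
  have himg : (Finset.Icc 1 Nmax).image (rep Nmax d) = Finset.Icc 1 Nmax := by
    apply Finset.eq_of_subset_of_card_le
    · intro j hj
      rcases Finset.mem_image.mp hj with ⟨t, ht, rfl⟩
      rw [Finset.mem_Icc] at ht ⊢
      have := rep_mem_Icc Nmax d t ht.1 ht.2
      simpa [Finset.mem_Icc] using this
    · rw [Finset.card_image_of_injOn]
      intro s hs t ht hEq
      exact hinj (by simpa [Set.mem_Icc] using (Finset.mem_Icc.mp hs))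
        (by simpa [Set.mem_Icc] using (Finset.mem_Icc.mp ht)) hEq
  intro j hj
  have : j ∈ (Finset.Icc 1 Nmax).image (rep Nmax d) := by
    rw [himg, Finset.mem_Icc]; exact ⟨hj.1, hj.2⟩
  rcases Finset.mem_image.mp this with ⟨t, ht, rfl⟩
  exact ⟨t, by simpa [Set.mem_Icc] using Finset.mem_Icc.mp ht, rfl⟩

/-- If the candidates are distinct and in range up to time `t`, `rep` follows them. -/
lemma rep_eq_of_valid (Nmax : ℕ) (d : ℕ → ℕ) (t : ℕ)
    (hd : ∀ s, 1 ≤ s → s ≤ t → d s ∈ Finset.Icc 1 Nmax ∧ ∀ s', 1 ≤ s' → s' < s → d s' ≠ d s) :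
    ∀ s, 1 ≤ s → s ≤ t → rep Nmax d s = d s := by
  intro s
  induction s using Nat.strong_induction_on with
  | _ s ih =>
    intro hs1 hst
    have himg : (Finset.Icc 1 (s - 1)).image (rep Nmax d) = (Finset.Icc 1 (s - 1)).image d := by
      apply Finset.image_congr
      intro s' hs'
      rw [Finset.mem_coe, Finset.mem_Icc] at hs'
      exact ih s' (by omega) hs'.1 (by omega)
    have hmem : d s ∈ availS Nmax d s := by
      rw [availS, himg, Finset.mem_sdiff]
      refine ⟨(hd s hs1 hst).1, ?_⟩
      intro hc
      rcases Finset.mem_image.mp hc with ⟨s', hs', hEq⟩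
      rw [Finset.mem_Icc] at hs'
      exact (hd s hs1 hst).2 s' hs'.1 (by omega) hEq
    rw [rep_eq, if_pos ⟨hs1, hmem⟩]

/-- `rep … t` only depends on the candidates at times `1,…,t`. -/
lemma rep_congr (Nmax : ℕ) (d d' : ℕ → ℕ) (t : ℕ)
    (h : ∀ s, 1 ≤ s → s ≤ t → d s = d' s) : rep Nmax d t = rep Nmax d' t := by
  induction t using Nat.strong_induction_on with
  | _ t ih =>
    have himg : (Finset.Icc 1 (t - 1)).image (rep Nmax d)
        = (Finset.Icc 1 (t - 1)).image (rep Nmax d') := by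
      apply Finset.image_congr
      intro s hs
      rw [Finset.mem_coe, Finset.mem_Icc] at hs
      exact ih s (by omega) (fun u hu1 hu2 => h u hu1 (by omega))
    have havail : availS Nmax d t = availS Nmax d' t := by rw [availS, availS, himg]
    rw [rep_eq, rep_eq, havail]
    rcases Nat.lt_or_ge t 1 with h1 | h1
    · simp [Nat.lt_one_iff.mp h1]
    · rw [h t h1 le_rfl]

/-- Measurability of the repaired policy. -/
lemma rep_meas {α : Type*} [m : MeasurableSpace α] (Nmax : ℕ) (c : ℕ → α → ℕ) (t : ℕ)
    (hc : ∀ s, 1 ≤ s → s ≤ t → Measurable (c s)) :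
    Measurable (fun a => rep Nmax (fun s => c s a) t) := by
  have key : (fun a => rep Nmax (fun s => c s a) t)
      = (fun w : Fin (t + 1) → ℕ => rep Nmax (fun s => if h : s < t + 1 then w ⟨s, h⟩ else 0) t)
        ∘ (fun a (s : Fin (t + 1)) => if s.1 = 0 then 0 else c s.1 a) := by
    funext a
    apply rep_congr
    intro s h1 h2
    have hs : s < t + 1 := by omega
    simp only [Function.comp]
    rw [dif_pos hs, if_neg (by omega)]
  rw [key]
  exact (measurable_of_countable _).comp
    (measurable_pi_lambda _ fun s => by
      by_cases h0 : s.1 = 0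
      · simp only [h0, if_pos rfl]; exact measurable_const
      · simp only [if_neg h0]
        exact hc s.1 (by omega) (by omega))


variable {Ω β : Type*} [MeasurableSpace β] (f : ℕ → Ω → β)

lemma genFilt_mono {s t : ℕ} (h : s ≤ t) : genFilt f s ≤ genFilt f t := by
  apply biSup_mono
  exact Set.Icc_subset_Icc_right h

lemma genFilt_le {m : MeasurableSpace Ω} (hf : ∀ i, Measurable (f i)) (t : ℕ) :
    genFilt f t ≤ m :=
  iSup₂_le fun i _ => (hf i).comap_le

lemma genFilt_eq_comap (t : ℕ) :
    genFilt f t = MeasurableSpace.comap (fun ω (i : Set.Icc 1 t) => f i.1 ω)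
      MeasurableSpace.pi := by
  apply le_antisymm
  · refine iSup₂_le fun i hi => ?_
    have : f i = (fun v : Set.Icc 1 t → β => v ⟨i, hi⟩) ∘ (fun ω (i : Set.Icc 1 t) => f i.1 ω) :=
      rfl
    rw [this, ← MeasurableSpace.comap_comp]
    exact MeasurableSpace.comap_mono (measurable_pi_apply (⟨i, hi⟩ : Set.Icc 1 t)).comap_le
  · refine @Measurable.comap_le Ω _ (genFilt f t) _ _ ?_
    refine @measurable_pi_lambda Ω _ _ (genFilt f t) _ _ fun i => ?_
    exact @Measurable.of_comap_le Ω β (genFilt f t) _ _ (le_biSup (fun i => MeasurableSpace.comap (f i) inferInstance) i.2)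

lemma measurable_vec (t : ℕ) :
    @Measurable Ω (Set.Icc 1 t → β) (genFilt f t) _ (fun ω (i : Set.Icc 1 t) => f i.1 ω) := by
  refine @Measurable.of_comap_le Ω _ (genFilt f t) _ _ ?_
  rw [← genFilt_eq_comap]

/-- Doob–Dynkin-type representation for an adapted in-range decision. -/
lemma doobDynkin {Nmax : ℕ} (q : ℕ → Ω → ℕ) (t : ℕ) (ht : 1 ≤ t) (htN : t ≤ Nmax)
    (hq : ∀ j, MeasurableSet[genFilt f t] {ω | q t ω = j})
    (hrange : ∀ ω, q t ω ∈ Finset.Icc 1 Nmax) :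
    ∃ F : (Set.Icc 1 t → β) → ℕ, Measurable F ∧
      ∀ ω, F (fun i : Set.Icc 1 t => f i.1 ω) = q t ω := by
  have h' : ∀ j, MeasurableSet[MeasurableSpace.comap
      (fun ω (i : Set.Icc 1 t) => f i.1 ω) MeasurableSpace.pi] {ω | q t ω = j} := by
    intro j; rw [← genFilt_eq_comap]; exact hq j
  choose B hBmeas hBpre using fun j => (MeasurableSpace.measurableSet_comap.mp (h' j))
  have hmem : ∀ ω j, (fun i : Set.Icc 1 t => f i.1 ω) ∈ B j ↔ q t ω = j := by
    intro ω j
    constructor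
    · intro h
      have : ω ∈ (fun ω (i : Set.Icc 1 t) => f i.1 ω) ⁻¹' (B j) := h
      rw [hBpre j] at this; exact this
    · intro h
      have : ω ∈ {ω | q t ω = j} := h
      rw [← hBpre j] at this; exact this
  have hex : ∀ v : Set.Icc 1 t → β, ∃ j, (j ∈ Finset.Icc 1 Nmax ∧ v ∈ B j) ∨ j = Nmax + 1 :=
    fun v => ⟨Nmax + 1, Or.inr rfl⟩
  refine ⟨fun v => Nat.find (hex v), ?_, ?_⟩
  · apply measurable_find
    intro j
    by_cases hj : j ∈ Finset.Icc 1 Nmax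
    · by_cases hj' : j = Nmax + 1
      · simp [hj, hj']
      · have : {v : Set.Icc 1 t → β | (j ∈ Finset.Icc 1 Nmax ∧ v ∈ B j) ∨ j = Nmax + 1}
            = B j := by ext v; simp [hj, hj']
        rw [this]; exact hBmeas j
    · by_cases hj' : j = Nmax + 1
      · simp [hj']
      · have : {v : Set.Icc 1 t → β | (j ∈ Finset.Icc 1 Nmax ∧ v ∈ B j) ∨ j = Nmax + 1}
            = ∅ := by ext v; simp [hj, hj']
        rw [this]; exact MeasurableSet.empty
  · intro ω
    rw [Nat.find_eq_iff]
    constructor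
    · exact Or.inl ⟨hrange ω, (hmem ω _).mpr rfl⟩
    · intro j hj
      rintro (⟨hj1, hj2⟩ | rfl)
      · exact absurd ((hmem ω j).mp hj2) (by omega)
      · have := (Finset.mem_Icc.mp (hrange ω)).2
        omega


end Stmt0Aux

namespace Stmt0Aux

lemma core {Ω : Type*} [MeasurableSpace Ω] (μ : Measure Ω) [IsProbabilityMeasure μ]
    (Nmax : ℕ)
    (N : Ω → ℕ) (hNmeas : Measurable N) (hNrange : ∀ ω, N ω ∈ Set.Icc 1 Nmax)
    (γ : ℕ → ℝ) (hγ : ∀ k, γ k = (μ {ω | N ω = k}).toReal)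
    (Y : ℕ → Ω → ℝ) (hYmeas : ∀ t, Measurable (Y t))
    (hYint : ∀ t ∈ Set.Icc 1 Nmax, Integrable (Y t) μ)
    (hNY : IndepFun N (fun ω (i : Set.Icc 1 Nmax) => Y i.1 ω) μ)
    (p : ℕ → ℝ) (π πb : ℕ → Ω → ℕ)
    (hπb_meas : ∀ t, 1 ≤ t → t ≤ Nmax → Measurable (πb t))
    (hπb_le : ∀ t, 1 ≤ t → t ≤ Nmax → ∀ ω, πb t ω ≤ Nmax)
    (hπ_le : ∀ t, 1 ≤ t → t ≤ Nmax → ∀ ω, π t ω ≤ Nmax)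
    (hagree : ∀ t ω, 1 ≤ t → t ≤ Nmax → t ≤ N ω → πb t ω = π t ω)
    (hφ : ∀ t, 1 ≤ t → t ≤ Nmax → ∃ φ : (Set.Icc 1 Nmax → ℝ) → ℝ, Measurable φ ∧
      ∀ ω, φ (fun i : Set.Icc 1 Nmax => Y i.1 ω) = p (π t ω) * Y t ω) :
    ∫ ω, ∑ t ∈ Finset.Icc 1 (N ω), p (πb t ω) * Y t ω ∂μ
      = ∫ ω, ∑ t ∈ Finset.Icc 1 Nmax,
          p (π t ω) * (Y t ω * ∑ k ∈ Finset.Icc t Nmax, γ k) ∂μ := by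
  set M : ℝ := (Finset.Icc 0 Nmax).sup' ⟨0, by simp⟩ (fun j => |p j|) with hM
  have hMle : ∀ j, j ≤ Nmax → |p j| ≤ M := fun j hj =>
    Finset.le_sup' (fun j => |p j|) (by simp [hj])
  have hVmeas : Measurable (fun ω (i : Set.Icc 1 Nmax) => Y i.1 ω) :=
    measurable_pi_lambda _ fun i => hYmeas i.1
  have hint : ∀ (q : ℕ → Ω → ℕ) (t : ℕ), AEStronglyMeasurable (fun ω => p (q t ω) * Y t ω) μ →
      (∀ ω, q t ω ≤ Nmax) → 1 ≤ t → t ≤ Nmax →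
      Integrable (fun ω => p (q t ω) * Y t ω) μ := by
    intro q t hmeas hle ht1 ht2
    refine Integrable.mono' (((hYint t ⟨ht1, ht2⟩).abs).const_mul M) hmeas ?_
    filter_upwards with ω
    rw [Real.norm_eq_abs, abs_mul]
    exact mul_le_mul_of_nonneg_right (hMle _ (hle ω)) (abs_nonneg _)
  have hw : ∀ t, 1 ≤ t → (μ {ω | t ≤ N ω}).toReal = ∑ k ∈ Finset.Icc t Nmax, γ k := by
    intro t ht
    have hset : {ω | t ≤ N ω} = ⋃ k ∈ (Finset.Icc t Nmax : Finset ℕ), {ω | N ω = k} := by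
      ext ω
      simp only [Set.mem_setOf_eq, Set.mem_iUnion, Finset.mem_Icc, exists_prop]
      constructor
      · intro h; exact ⟨N ω, ⟨h, (hNrange ω).2⟩, rfl⟩
      · rintro ⟨k, ⟨h1, _⟩, hk⟩; omega
    have hmeas' : ∀ k ∈ Finset.Icc t Nmax, MeasurableSet {ω | N ω = k} :=
      fun k _ => hNmeas (measurableSet_singleton k)
    have hdisj : Set.PairwiseDisjoint (↑(Finset.Icc t Nmax)) (fun k => {ω | N ω = k}) := by
      intro i _ j _ hij
      simp only [Function.onFun]
      apply Set.disjoint_left.mpr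
      intro ω h1 h2
      simp only [Set.mem_setOf_eq] at h1 h2
      omega
    rw [hset, measure_biUnion_finset hdisj hmeas',
      ENNReal.toReal_sum (fun k _ => measure_ne_top μ _)]
    exact Finset.sum_congr rfl fun k _ => (hγ k).symm
  have hNset : ∀ t : ℕ, MeasurableSet {ω | t ≤ N ω} := fun t => hNmeas measurableSet_Ici
  have hπb_int : ∀ t, 1 ≤ t → t ≤ Nmax → Integrable (fun ω => p (πb t ω) * Y t ω) μ := by
    intro t ht1 ht2
    refine hint πb t ?_ (hπb_le t ht1 ht2) ht1 ht2
    exact (((measurable_from_nat (f := p)).comp (hπb_meas t ht1 ht2)).mul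
      (hYmeas t)).aestronglyMeasurable
  have hπ_int : ∀ t, 1 ≤ t → t ≤ Nmax → Integrable (fun ω => p (π t ω) * Y t ω) μ := by
    intro t ht1 ht2
    obtain ⟨φ, hφm, hφeq⟩ := hφ t ht1 ht2
    have heq : (fun ω => p (π t ω) * Y t ω)
        = fun ω => φ (fun i : Set.Icc 1 Nmax => Y i.1 ω) :=
      funext fun ω => (hφeq ω).symm
    refine hint π t ?_ (hπ_le t ht1 ht2) ht1 ht2
    rw [heq]
    exact (hφm.comp hVmeas).aestronglyMeasurable
  have key : ∀ t, 1 ≤ t → t ≤ Nmax →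
      ∫ ω, (if t ≤ N ω then p (πb t ω) * Y t ω else 0) ∂μ
        = (∑ k ∈ Finset.Icc t Nmax, γ k) * ∫ ω, p (π t ω) * Y t ω ∂μ := by
    intro t ht1 ht2
    obtain ⟨φ, hφm, hφeq⟩ := hφ t ht1 ht2
    have heq : (fun ω => p (π t ω) * Y t ω)
        = fun ω => φ (fun i : Set.Icc 1 Nmax => Y i.1 ω) :=
      funext fun ω => (hφeq ω).symm
    have hG_int : Integrable (fun ω => φ (fun i : Set.Icc 1 Nmax => Y i.1 ω)) μ := by
      have h := hπ_int t ht1 ht2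
      rwa [heq] at h
    have hXind : (fun ω => if t ≤ N ω then (1 : ℝ) else 0)
        = Set.indicator {ω | t ≤ N ω} (1 : Ω → ℝ) := by
      funext ω
      simp [Set.indicator_apply, Set.mem_setOf_eq]
    have hXint : Integrable (fun ω => if t ≤ N ω then (1 : ℝ) else 0) μ := by
      rw [hXind]; exact (integrable_const 1).indicator (hNset t)
    have hI : IndepFun (fun ω => if t ≤ N ω then (1 : ℝ) else 0)
        (fun ω => φ (fun i : Set.Icc 1 Nmax => Y i.1 ω)) μ :=
      hNY.comp (φ := fun n : ℕ => if t ≤ n then (1 : ℝ) else 0) (ψ := φ)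
        measurable_from_nat hφm
    have hmul : ∫ ω, (if t ≤ N ω then (1 : ℝ) else 0)
          * φ (fun i : Set.Icc 1 Nmax => Y i.1 ω) ∂μ
        = (∫ ω, (if t ≤ N ω then (1 : ℝ) else 0) ∂μ)
          * ∫ ω, φ (fun i : Set.Icc 1 Nmax => Y i.1 ω) ∂μ :=
      hI.integral_fun_mul_eq_mul_integral hXint.aestronglyMeasurable hG_int.aestronglyMeasurable
    have hpt : ∀ ω, (if t ≤ N ω then (1 : ℝ) else 0)
        * φ (fun i : Set.Icc 1 Nmax => Y i.1 ω)
        = if t ≤ N ω then p (πb t ω) * Y t ω else 0 := by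
      intro ω
      by_cases h : t ≤ N ω
      · rw [if_pos h, if_pos h, one_mul, hφeq, hagree t ω ht1 ht2 h]
      · rw [if_neg h, if_neg h, zero_mul]
    have hXval : ∫ ω, (if t ≤ N ω then (1 : ℝ) else 0) ∂μ
        = (μ {ω | t ≤ N ω}).toReal := by
      rw [hXind, MeasureTheory.integral_indicator_one (hNset t), measureReal_def]
    calc ∫ ω, (if t ≤ N ω then p (πb t ω) * Y t ω else 0) ∂μ
        = ∫ ω, (if t ≤ N ω then (1 : ℝ) else 0)
            * φ (fun i : Set.Icc 1 Nmax => Y i.1 ω) ∂μ :=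
          integral_congr_ae (Filter.Eventually.of_forall fun ω => (hpt ω).symm)
      _ = (∫ ω, (if t ≤ N ω then (1 : ℝ) else 0) ∂μ)
            * ∫ ω, φ (fun i : Set.Icc 1 Nmax => Y i.1 ω) ∂μ := hmul
      _ = (∑ k ∈ Finset.Icc t Nmax, γ k) * ∫ ω, p (π t ω) * Y t ω ∂μ := by
          rw [hXval, hw t ht1]
          congr 1
          exact integral_congr_ae (Filter.Eventually.of_forall fun ω => hφeq ω)
  calc ∫ ω, ∑ t ∈ Finset.Icc 1 (N ω), p (πb t ω) * Y t ω ∂μ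
      = ∫ ω, ∑ t ∈ Finset.Icc 1 Nmax, (if t ≤ N ω then p (πb t ω) * Y t ω else 0) ∂μ := by
        refine integral_congr_ae (Filter.Eventually.of_forall fun ω => ?_)
        dsimp only
        rw [← Finset.sum_filter]
        congr 1
        ext s
        simp only [Finset.mem_filter, Finset.mem_Icc]
        have h2 := (hNrange ω).2
        constructor
        · intro h; omega
        · intro h; omega
    _ = ∑ t ∈ Finset.Icc 1 Nmax, ∫ ω, (if t ≤ N ω then p (πb t ω) * Y t ω else 0) ∂μ := by
        refine integral_finset_sum _ fun t ht => ?_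
        obtain ⟨ht1, ht2⟩ := Finset.mem_Icc.mp ht
        have : (fun ω => if t ≤ N ω then p (πb t ω) * Y t ω else 0)
            = Set.indicator {ω | t ≤ N ω} (fun ω => p (πb t ω) * Y t ω) := by
          funext ω
          simp [Set.indicator_apply, Set.mem_setOf_eq]
        rw [this]
        exact (hπb_int t ht1 ht2).indicator (hNset t)
    _ = ∑ t ∈ Finset.Icc 1 Nmax,
          (∑ k ∈ Finset.Icc t Nmax, γ k) * ∫ ω, p (π t ω) * Y t ω ∂μ := by
        refine Finset.sum_congr rfl fun t ht => ?_
        obtain ⟨ht1, ht2⟩ := Finset.mem_Icc.mp ht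
        exact key t ht1 ht2
    _ = ∑ t ∈ Finset.Icc 1 Nmax,
          ∫ ω, p (π t ω) * (Y t ω * ∑ k ∈ Finset.Icc t Nmax, γ k) ∂μ := by
        refine Finset.sum_congr rfl fun t ht => ?_
        have hfun : (fun ω => p (π t ω) * (Y t ω * ∑ k ∈ Finset.Icc t Nmax, γ k))
            = fun ω => (p (π t ω) * Y t ω) * ∑ k ∈ Finset.Icc t Nmax, γ k :=
          funext fun ω => by ring
        rw [hfun, integral_mul_const, mul_comm]
    _ = ∫ ω, ∑ t ∈ Finset.Icc 1 Nmax,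
          p (π t ω) * (Y t ω * ∑ k ∈ Finset.Icc t Nmax, γ k) ∂μ := by
        refine (integral_finset_sum _ fun t ht => ?_).symm
        obtain ⟨ht1, ht2⟩ := Finset.mem_Icc.mp ht
        have hfun : (fun ω => p (π t ω) * (Y t ω * ∑ k ∈ Finset.Icc t Nmax, γ k))
            = fun ω => (p (π t ω) * Y t ω) * ∑ k ∈ Finset.Icc t Nmax, γ k :=
          funext fun ω => by ring
        rw [hfun]
        exact (hπ_int t ht1 ht2).mul_const _

/-- Transfer of a policy adapted to `U` to a policy adapted to `W`, agreeing
pathwise as long as `U` and `W` agree. -/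
lemma transfer {Ω : Type*} (Nmax : ℕ) (U W : ℕ → Ω → ℝ) (σp : ℕ → Ω → ℕ)
    (hσbij : ∀ ω, Set.BijOn (fun t => σp t ω) (Set.Icc 1 Nmax) (Set.Icc 1 Nmax))
    (hσmeas : ∀ t j, MeasurableSet[genFilt U t] {ω | σp t ω = j}) :
    ∃ τp : ℕ → Ω → ℕ,
      (∀ ω, Set.BijOn (fun t => τp t ω) (Set.Icc 1 Nmax) (Set.Icc 1 Nmax)) ∧
      (∀ t j, MeasurableSet[genFilt W t] {ω | τp t ω = j}) ∧
      (∀ t ω, 1 ≤ t → t ≤ Nmax → (∀ i, 1 ≤ i → i ≤ t → U i ω = W i ω) → τp t ω = σp t ω) ∧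
      (∀ t ω, τp t ω ≤ Nmax) := by
  have hσrange : ∀ t, 1 ≤ t → t ≤ Nmax → ∀ ω, σp t ω ∈ Finset.Icc 1 Nmax := by
    intro t ht1 ht2 ω
    have := (hσbij ω).mapsTo (Set.mem_Icc.mpr ⟨ht1, ht2⟩)
    rw [Finset.mem_Icc]
    exact Set.mem_Icc.mp this
  have hF : ∀ t, 1 ≤ t → t ≤ Nmax → ∃ F : (Set.Icc 1 t → ℝ) → ℕ, Measurable F ∧
      ∀ ω, F (fun i : Set.Icc 1 t => U i.1 ω) = σp t ω := by
    intro t ht1 ht2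
    exact doobDynkin U σp t ht1 ht2 (hσmeas t) (hσrange t ht1 ht2)
  choose F hFmeas hFeq using hF
  set c : ℕ → Ω → ℕ := fun t ω =>
    if h : 1 ≤ t ∧ t ≤ Nmax then F t h.1 h.2 (fun i : Set.Icc 1 t => W i.1 ω) else 0 with hc
  refine ⟨fun t ω => rep Nmax (fun s => c s ω) t, fun ω => rep_bijOn Nmax _, ?_, ?_,
    fun t ω => rep_le Nmax _ t⟩
  · intro t j
    have hcm : ∀ s, 1 ≤ s → s ≤ t →
        @Measurable Ω ℕ (genFilt W t) _ (c s) := by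
      intro s hs1 hst
      by_cases hs2 : s ≤ Nmax
      · have h1 : @Measurable Ω ℕ (genFilt W s) _ (c s) := by
          have : c s = fun ω =>
              F s hs1 hs2 (fun i : Set.Icc 1 s => W i.1 ω) := by
            funext ω
            rw [hc]
            simp only [dif_pos (And.intro hs1 hs2)]
          rw [this]
          exact (hFmeas s hs1 hs2).comp (measurable_vec W s)
        exact h1.mono (genFilt_mono W hst) le_rfl
      · have : c s = fun _ => 0 := by
          funext ω
          rw [hc]
          simp only [dif_neg (fun h : 1 ≤ s ∧ s ≤ Nmax => hs2 h.2)]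
        rw [this]
        exact @measurable_const ℕ Ω _ (genFilt W t) 0
    have := @rep_meas Ω (genFilt W t) Nmax c t hcm
    exact this (measurableSet_singleton j)
  · intro t ω ht1 ht2 hUW
    have hagree : ∀ s, 1 ≤ s → s ≤ t → c s ω = σp s ω := by
      intro s hs1 hst
      have hs2 : s ≤ Nmax := le_trans hst ht2
      rw [hc]
      simp only [dif_pos (And.intro hs1 hs2)]
      have hvec : (fun i : Set.Icc 1 s => W i.1 ω) = (fun i : Set.Icc 1 s => U i.1 ω) := by
        funext i
        have hi := i.2
        rw [Set.mem_Icc] at hi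
        exact (hUW i.1 hi.1 (le_trans hi.2 hst)).symm
      rw [hvec]
      exact hFeq s hs1 hs2 ω
    have hvalid : ∀ s, 1 ≤ s → s ≤ t →
        c s ω ∈ Finset.Icc 1 Nmax ∧
        ∀ s', 1 ≤ s' → s' < s → c s' ω ≠ c s ω := by
      intro s hs1 hst
      constructor
      · rw [hagree s hs1 hst]
        exact hσrange s hs1 (le_trans hst ht2) ω
      · intro s' hs1' hs's
        rw [hagree s hs1 hst, hagree s' hs1' (le_trans (le_of_lt hs's) hst)]
        intro hEq
        have h1 : (s' : ℕ) ∈ Set.Icc 1 Nmax := Set.mem_Icc.mpr ⟨hs1', by omega⟩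
        have h2 : (s : ℕ) ∈ Set.Icc 1 Nmax := Set.mem_Icc.mpr ⟨hs1, le_trans hst ht2⟩
        have := (hσbij ω).injOn h1 h2 hEq
        omega
    show rep Nmax (fun s => c s ω) t = σp t ω
    rw [rep_eq_of_valid Nmax (fun s => c s ω) t hvalid t ht1 le_rfl]
    exact hagree t ht1 le_rfl

/-- Any `Y`-adapted in-range decision's reward factors through the `Y`-vector. -/
lemma express {Ω : Type*} (Nmax : ℕ) (Y : ℕ → Ω → ℝ) (q : ℕ → Ω → ℕ)
    (hqmeas : ∀ t j, MeasurableSet[genFilt Y t] {ω | q t ω = j})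
    (hqrange : ∀ t, 1 ≤ t → t ≤ Nmax → ∀ ω, q t ω ∈ Finset.Icc 1 Nmax)
    (p : ℕ → ℝ) (t : ℕ) (ht1 : 1 ≤ t) (ht2 : t ≤ Nmax) :
    ∃ φ : (Set.Icc 1 Nmax → ℝ) → ℝ, Measurable φ ∧
      ∀ ω, φ (fun i : Set.Icc 1 Nmax => Y i.1 ω) = p (q t ω) * Y t ω := by
  obtain ⟨F, hFmeas, hFeq⟩ :=
    doobDynkin Y q t ht1 ht2 (hqmeas t) (hqrange t ht1 ht2)
  have hsub : ∀ i : Set.Icc (1:ℕ) t, i.1 ∈ Set.Icc 1 Nmax := by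
    intro i
    have hi := i.2
    rw [Set.mem_Icc] at hi ⊢
    exact ⟨hi.1, le_trans hi.2 ht2⟩
  set restr : (Set.Icc (1:ℕ) Nmax → ℝ) → (Set.Icc (1:ℕ) t → ℝ) :=
    fun v i => v ⟨i.1, hsub i⟩ with hrestr
  refine ⟨fun v => p (F (restr v)) * v ⟨t, Set.mem_Icc.mpr ⟨ht1, ht2⟩⟩, ?_, ?_⟩
  · refine Measurable.mul ?_ (measurable_pi_apply _)
    refine (measurable_from_nat (f := p)).comp ?_
    refine hFmeas.comp ?_
    exact measurable_pi_lambda _ fun i => measurable_pi_apply _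
  · intro ω
    have hre : restr (fun i : Set.Icc 1 Nmax => Y i.1 ω)
        = fun i : Set.Icc 1 t => Y i.1 ω := rfl
    show p (F (restr (fun i : Set.Icc 1 Nmax => Y i.1 ω))) * Y t ω = p (q t ω) * Y t ω
    rw [hre, hFeq ω]


end Stmt0Aux

/-- the sequential assignment problem with random horizon (Problem (AP2))
has the same optimal expected total reward as the fixed-horizon problem (AP1) with
horizon `Nmax` and job sizes `Y_t · ∑_{k=t}^{Nmax} γ_k`. -/
theorem stmt_0 {Ω : Type*} [MeasurableSpace Ω] (μ : Measure Ω) [IsProbabilityMeasure μ]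
    (Nmax : ℕ) (hNmax : 1 ≤ Nmax)
    (N : Ω → ℕ) (hNmeas : Measurable N) (hNrange : ∀ ω, N ω ∈ Set.Icc 1 Nmax)
    (γ : ℕ → ℝ) (hγ : ∀ k, γ k = (μ {ω | N ω = k}).toReal)
    (Y : ℕ → Ω → ℝ) (hYmeas : ∀ t, Measurable (Y t))
    (hYint : ∀ t ∈ Set.Icc 1 Nmax, Integrable (Y t) μ)
    (hYindep : IndepSeq Y (Set.Icc 1 Nmax) μ)
    (hY0 : ∀ t ∈ Set.Icc 1 Nmax, μ {ω | Y t ω = 0} = 0)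
    (hNY : IndepOfSeq N Y (Set.Icc 1 Nmax) μ)
    (Ybar : ℕ → Ω → ℝ) (hYbar : ∀ t ω, Ybar t ω = if t ≤ N ω then Y t ω else 0)
    (p : ℕ → ℝ) (hp : MonotoneOn p (Set.Icc 1 Nmax)) :
    sSup {x : ℝ | ∃ π : ℕ → Ω → ℕ,
        (∀ ω, Set.BijOn (fun t => π t ω) (Set.Icc 1 Nmax) (Set.Icc 1 Nmax)) ∧
        (∀ t j, MeasurableSet[genFilt Ybar t] {ω | π t ω = j}) ∧
        x = ∫ ω, ∑ t ∈ Finset.Icc 1 (N ω), p (π t ω) * Y t ω ∂μ}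
      = sSup {x : ℝ | ∃ π : ℕ → Ω → ℕ,
        (∀ ω, Set.BijOn (fun t => π t ω) (Set.Icc 1 Nmax) (Set.Icc 1 Nmax)) ∧
        (∀ t j, MeasurableSet[genFilt Y t] {ω | π t ω = j}) ∧
        x = ∫ ω, ∑ t ∈ Finset.Icc 1 Nmax,
              p (π t ω) * (Y t ω * ∑ k ∈ Finset.Icc t Nmax, γ k) ∂μ} := by
  classical
  have hYbar_meas : ∀ t, Measurable (Ybar t) := by
    intro t
    have h : Ybar t = fun ω => if t ≤ N ω then Y t ω else 0 := funext fun ω => hYbar t ω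
    rw [h]
    exact Measurable.ite (hNmeas measurableSet_Ici) (hYmeas t) measurable_const
  have hNYfun : IndepFun N (fun ω (i : Set.Icc 1 Nmax) => Y i.1 ω) μ := hNY
  have hmeas_of : ∀ (f : ℕ → Ω → ℝ), (∀ i, Measurable (f i)) →
      ∀ (q : ℕ → Ω → ℕ), (∀ t j, MeasurableSet[genFilt f t] {ω | q t ω = j}) →
      ∀ t, Measurable (q t) := by
    intro f hf q hq t
    refine measurable_to_countable' fun j => ?_
    exact (Stmt0Aux.genFilt_le f hf t) _ (hq t j)
  congr 1
  apply Set.eq_of_subset_of_subset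
  · -- random-horizon values are fixed-horizon values
    rintro x ⟨πb0, hbij, hmeas, rfl⟩
    obtain ⟨π, hπbij, hπmeas, hπagree, hπle⟩ :=
      Stmt0Aux.transfer Nmax Ybar Y πb0 hbij hmeas
    refine ⟨π, hπbij, hπmeas, ?_⟩
    refine Stmt0Aux.core μ Nmax N hNmeas hNrange γ hγ Y hYmeas hYint hNYfun p π πb0
      (fun t _ _ => hmeas_of Ybar hYbar_meas πb0 hmeas t)
      (fun t ht1 ht2 ω => (Set.mem_Icc.mp ((hbij ω).mapsTo (Set.mem_Icc.mpr ⟨ht1, ht2⟩))).2)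
      (fun t _ _ ω => hπle t ω) ?_ ?_
    · intro t ω ht1 ht2 htN
      exact (hπagree t ω ht1 ht2 fun i _ hi2 => by
        rw [hYbar i ω, if_pos (le_trans hi2 htN)]).symm
    · intro t ht1 ht2
      refine Stmt0Aux.express Nmax Y π hπmeas ?_ p t ht1 ht2
      intro t' ht1' ht2' ω
      rw [Finset.mem_Icc]
      exact Set.mem_Icc.mp ((hπbij ω).mapsTo (Set.mem_Icc.mpr ⟨ht1', ht2'⟩))
  · -- fixed-horizon values are random-horizon values
    rintro x ⟨π0, hbij, hmeas, rfl⟩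
    obtain ⟨πb, hπbbij, hπbmeas, hπbagree, hπble⟩ :=
      Stmt0Aux.transfer Nmax Y Ybar π0 hbij hmeas
    refine ⟨πb, hπbbij, hπbmeas, ?_⟩
    refine (Stmt0Aux.core μ Nmax N hNmeas hNrange γ hγ Y hYmeas hYint hNYfun p π0 πb
      (fun t _ _ => hmeas_of Ybar hYbar_meas πb hπbmeas t)
      (fun t _ _ ω => hπble t ω)
      (fun t ht1 ht2 ω => (Set.mem_Icc.mp ((hbij ω).mapsTo (Set.mem_Icc.mpr ⟨ht1, ht2⟩))).2)
      (fun t ω ht1 ht2 htN => hπbagree t ω ht1 ht2 fun i _ hi2 => by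
        rw [hYbar i ω, if_pos (le_trans hi2 htN)]) ?_).symm
    intro t ht1 ht2
    refine Stmt0Aux.express Nmax Y π0 hmeas ?_ p t ht1 ht2
    intro t' ht1' ht2' ω
    rw [Finset.mem_Icc]
    exact Set.mem_Icc.mp ((hbij ω).mapsTo (Set.mem_Icc.mpr ⟨ht1', ht2'⟩))
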